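/- Let m be a nonnegative integer. Then Y^(m)(n) >= 0 for all nonnegative integers n. -/

import Mathlib

/-- The geometric series `1/(1-q^k) = ∑_{j ≥ 0} q^{k·j}` as a formal power series over `ℤ`:
its coefficient at `q^n` is `1` exactly when `k ∣ n`. -/
def geomSer (k : ℕ) : PowerSeries ℤ := PowerSeries.mk fun n => if k ∣ n then 1 else 0

/-- The formal power series `∑_{k ≥ 1} (-1)^k q^{k(3k+1)+2mk}/(1-q^{2k})`.
For a fixed `n`, only the (finitely many) summands with `1 ≤ k ≤ n` can contribute to the
coefficient of `q^n` (for `k > n` the lowest exponent `k(3k+1)+2mk` exceeds `n`), so the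
coefficient of `q^n` of the infinite sum is the corresponding finite sum of coefficients. -/
noncomputable def seriesA (m : ℕ) : PowerSeries ℤ :=
  PowerSeries.mk fun n => ∑ k ∈ Finset.Icc 1 n,
    (PowerSeries.coeff (R := ℤ) n)
      (PowerSeries.C (R := ℤ) ((-1) ^ k) * PowerSeries.X ^ (k * (3 * k + 1) + 2 * m * k) *
        geomSer (2 * k))

/-- The formal power series `∑_{k ≥ 1} (-1)^k q^{k(k+1)/2+mk}/(1-q^k)` (same convention). -/
noncomputable def seriesB (m : ℕ) : PowerSeries ℤ :=
  PowerSeries.mk fun n => ∑ k ∈ Finset.Icc 1 n,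
    (PowerSeries.coeff (R := ℤ) n)
      (PowerSeries.C (R := ℤ) ((-1) ^ k) * PowerSeries.X ^ (k * (k + 1) / 2 + m * k) * geomSer k)

/-- The formal power series `∑_{k ≥ 1} (-1)^k q^{k(k+1)+2mk}/(1-q^{2k})` (same convention). -/
noncomputable def seriesC (m : ℕ) : PowerSeries ℤ :=
  PowerSeries.mk fun n => ∑ k ∈ Finset.Icc 1 n,
    (PowerSeries.coeff (R := ℤ) n)
      (PowerSeries.C (R := ℤ) ((-1) ^ k) * PowerSeries.X ^ (k * (k + 1) + 2 * m * k) *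
        geomSer (2 * k))

section Stmt3Aux

open scoped Classical

def Qp (m M k : ℕ) : Prop := ∃ l, M = k * l ∧ k + 2*m + 1 ≤ l ∧ (k + l) % 2 = 1

lemma coeff_CXgeom (a : ℤ) (e c n : ℕ) :
    (PowerSeries.coeff (R := ℤ) n) (PowerSeries.C (R := ℤ) a * PowerSeries.X ^ e * geomSer c)
      = if e ≤ n ∧ c ∣ n - e then a else 0 := by
  rw [mul_right_comm, PowerSeries.coeff_mul_X_pow']
  by_cases h1 : e ≤ n
  · rw [if_pos h1, PowerSeries.coeff_C_mul, geomSer, PowerSeries.coeff_mk]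
    by_cases h2 : c ∣ n - e <;> simp [h1, h2]
  · simp [h1]

lemma condC_iff (m n k : ℕ) :
    (k*(k+1) + 2*m*k ≤ n ∧ 2*k ∣ n - (k*(k+1) + 2*m*k)) ↔ Qp m n k := by
  constructor
  · rintro ⟨hle, j, hj⟩
    refine ⟨k + 1 + 2*m + 2*j, ?_, by omega, by omega⟩
    have h1 : k * (k + 1 + 2*m + 2*j) = k*(k+1) + 2*m*k + 2*k*j := by ring
    omega
  · rintro ⟨l, hl, hll, hlp⟩
    have hj : ∃ j, l = k + 1 + 2*m + 2*j := ⟨(l - k - 1 - 2*m)/2, by omega⟩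
    obtain ⟨j, rfl⟩ := hj
    have h1 : k * (k + 1 + 2*m + 2*j) = k*(k+1) + 2*m*k + 2*k*j := by ring
    exact ⟨by omega, j, by omega⟩

lemma condB_iff (m N k : ℕ) :
    (k*(k+1)/2 + m*k ≤ N ∧ k ∣ N - (k*(k+1)/2 + m*k)) ↔ Qp m (2*N) k := by
  have he : k*(k+1)/2 * 2 = k*(k+1) := Nat.div_mul_cancel (Nat.even_mul_succ_self k).two_dvd
  constructor
  · rintro ⟨hle, j, hj⟩
    refine ⟨k + 1 + 2*m + 2*j, ?_, by omega, by omega⟩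
    have h1 : k * (k + 1 + 2*m + 2*j) = k*(k+1) + 2*(m*k) + 2*(k*j) := by ring
    omega
  · rintro ⟨l, hl, hll, hlp⟩
    have hj : ∃ j, l = k + 1 + 2*m + 2*j := ⟨(l - k - 1 - 2*m)/2, by omega⟩
    obtain ⟨j, rfl⟩ := hj
    have h1 : k * (k + 1 + 2*m + 2*j) = k*(k+1) + 2*(m*k) + 2*(k*j) := by ring
    exact ⟨by omega, j, by omega⟩

open Finset in
lemma key_card (m n : ℕ) :
    ((Finset.Icc 1 n).filter (fun k => k % 2 = 0 ∧ Qp m (2*n) k)).card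
      + ((Finset.Icc 1 n).filter (fun k => k % 2 = 1 ∧ Qp m n k)).card
    ≤ ((Finset.Icc 1 n).filter (fun k => k % 2 = 0 ∧ Qp m n k)).card
      + ((Finset.Icc 1 n).filter (fun k => k % 2 = 1 ∧ Qp m (2*n) k)).card := by
  classical
  have hd1 : Disjoint ((Finset.Icc 1 n).filter (fun k => k % 2 = 0 ∧ Qp m (2*n) k))
      ((Finset.Icc 1 n).filter (fun k => k % 2 = 1 ∧ Qp m n k)) := by
    rw [Finset.disjoint_left]
    intro a ha hb
    simp only [Finset.mem_filter] at ha hb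
    omega
  have hd2 : Disjoint ((Finset.Icc 1 n).filter (fun k => k % 2 = 0 ∧ Qp m n k))
      ((Finset.Icc 1 n).filter (fun k => k % 2 = 1 ∧ Qp m (2*n) k)) := by
    rw [Finset.disjoint_left]
    intro a ha hb
    simp only [Finset.mem_filter] at ha hb
    omega
  rw [← Finset.card_union_of_disjoint hd1, ← Finset.card_union_of_disjoint hd2]
  apply Finset.card_le_card_of_injOn (fun k => if k % 2 = 0 then k / 2 else k)
  · intro k hk
    simp only [Finset.mem_coe, Finset.mem_union, Finset.mem_filter, Finset.mem_Icc] at hk ⊢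
    rcases hk with ⟨⟨hk1, hk2⟩, hke, l, hl, hll, hlp⟩ | ⟨⟨hk1, hk2⟩, hko, l, hl, hll, hlp⟩
    · -- k even, Qp m (2n) k
      simp only [if_pos hke]
      set t := k / 2 with ht
      have hkt : k = 2 * t := by omega
      have hnt : n = t * l := by
        have h2 : 2 * n = 2 * (t * l) := by rw [hl, hkt]; ring
        omega
      by_cases hte : t % 2 = 0
      · left
        exact ⟨⟨by omega, by omega⟩, hte, l, hnt, by omega, by omega⟩
      · right
        refine ⟨⟨by omega, by omega⟩, by omega, 2*l, by rw [hl, hkt]; ring, by omega, by omega⟩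
    · -- k odd, Qp m n k
      simp only [if_neg (by omega : ¬ k % 2 = 0)]
      exact Or.inr ⟨⟨hk1, hk2⟩, hko, 2*l, by rw [hl]; ring, by omega, by omega⟩
  · intro a ha b hb hab
    simp only [Finset.mem_coe, Finset.mem_union, Finset.mem_filter, Finset.mem_Icc] at ha hb
    by_cases hae : a % 2 = 0 <;> by_cases hbe : b % 2 = 0
    · simp only [if_pos hae, if_pos hbe] at hab; omega
    · -- a even, b odd : a/2 = b
      exfalso
      simp only [if_pos hae, if_neg hbe] at hab
      have haQ : Qp m (2*n) a := by
        rcases ha with ⟨_, _, h⟩ | ⟨_, h, _⟩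
        · exact h
        · omega
      have hbQ : Qp m n b := by
        rcases hb with ⟨_, h, _⟩ | ⟨_, _, h⟩
        · omega
        · exact h
      obtain ⟨l, hl, _, hlp⟩ := haQ
      obtain ⟨l2, hl2, _, hlp2⟩ := hbQ
      have hab2 : a = 2 * b := by omega
      have hnl : n = b * l := by
        have h2 : 2 * n = 2 * (b * l) := by rw [hl, hab2]; ring
        omega
      -- l odd (a even), b odd ⇒ n odd ; l2 even (b odd) ⇒ n even
      have hb1 : b % 2 = 1 := by omega
      have hl1 : l % 2 = 1 := by omega
      have hl20 : l2 % 2 = 0 := by omega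
      have h1 : n % 2 = 1 := by rw [hnl, Nat.mul_mod, hb1, hl1]
      have h2 : n % 2 = 0 := by rw [hl2, Nat.mul_mod, hb1, hl20]
      omega
    · -- a odd, b even
      exfalso
      simp only [if_neg hae, if_pos hbe] at hab
      have hbQ : Qp m (2*n) b := by
        rcases hb with ⟨_, _, h⟩ | ⟨_, h, _⟩
        · exact h
        · omega
      have haQ : Qp m n a := by
        rcases ha with ⟨_, h, _⟩ | ⟨_, _, h⟩
        · omega
        · exact h
      obtain ⟨l, hl, _, hlp⟩ := hbQ
      obtain ⟨l2, hl2, _, hlp2⟩ := haQ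
      have hab2 : b = 2 * a := by omega
      have hnl : n = a * l := by
        have h2 : 2 * n = 2 * (a * l) := by rw [hl, hab2]; ring
        omega
      have hb1 : a % 2 = 1 := by omega
      have hl1 : l % 2 = 1 := by omega
      have hl20 : l2 % 2 = 0 := by omega
      have h1 : n % 2 = 1 := by rw [hnl, Nat.mul_mod, hb1, hl1]
      have h2 : n % 2 = 0 := by rw [hl2, Nat.mul_mod, hb1, hl20]
      omega
    · simp only [if_neg hae, if_neg hbe] at hab; omega

lemma coeff_seriesB (m n : ℕ) :
    (PowerSeries.coeff (R := ℤ) n) (seriesB m)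
      = (((Finset.Icc 1 n).filter (fun k => k % 2 = 0 ∧ Qp m (2*n) k)).card : ℤ)
        - (((Finset.Icc 1 n).filter (fun k => k % 2 = 1 ∧ Qp m (2*n) k)).card : ℤ) := by
  rw [seriesB, PowerSeries.coeff_mk, ← Finset.sum_boole, ← Finset.sum_boole,
    ← Finset.sum_sub_distrib]
  apply Finset.sum_congr rfl
  intro k hk
  rw [coeff_CXgeom]
  by_cases hq : Qp m (2*n) k
  · rw [if_pos ((condB_iff m n k).mpr hq)]
    rcases Nat.even_or_odd k with h | h
    · have h2 : k % 2 = 0 := Nat.even_iff.mp h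
      simp [h.neg_one_pow, h2, hq]
    · have h2 : k % 2 = 1 := Nat.odd_iff.mp h
      simp [h.neg_one_pow, h2, hq, Nat.one_ne_zero]
  · rw [if_neg (fun hc => hq ((condB_iff m n k).mp hc))]
    simp [hq]

lemma coeff_seriesC (m n : ℕ) :
    (PowerSeries.coeff (R := ℤ) n) (seriesC m)
      = (((Finset.Icc 1 n).filter (fun k => k % 2 = 0 ∧ Qp m n k)).card : ℤ)
        - (((Finset.Icc 1 n).filter (fun k => k % 2 = 1 ∧ Qp m n k)).card : ℤ) := by
  rw [seriesC, PowerSeries.coeff_mk, ← Finset.sum_boole, ← Finset.sum_boole,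
    ← Finset.sum_sub_distrib]
  apply Finset.sum_congr rfl
  intro k hk
  rw [coeff_CXgeom]
  by_cases hq : Qp m n k
  · rw [if_pos ((condC_iff m n k).mpr hq)]
    rcases Nat.even_or_odd k with h | h
    · have h2 : k % 2 = 0 := Nat.even_iff.mp h
      simp [h.neg_one_pow, h2, hq]
    · have h2 : k % 2 = 1 := Nat.odd_iff.mp h
      simp [h.neg_one_pow, h2, hq, Nat.one_ne_zero]
  · rw [if_neg (fun hc => hq ((condC_iff m n k).mp hc))]
    simp [hq]

end Stmt3Aux

/-- Let `m` be a nonnegative integer and let `Y^(m)` be defined by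
`∑_{n ≥ 0} Y^(m)(n) q^n = ∑_{k≥1} (-1)^k q^{k(k+1)+2mk}/(1-q^{2k})
- ∑_{k≥1} (-1)^k q^{k(k+1)/2+mk}/(1-q^k)`. Then `Y^(m)(n) ≥ 0` for all `n ≥ 0`. -/



theorem stmt3 (m : ℕ) (Y : ℕ → ℤ)
    (hY : PowerSeries.mk Y = seriesC m - seriesB m)
    (n : ℕ) : 0 ≤ Y n := by
  have h := congrArg (PowerSeries.coeff (R := ℤ) n) hY
  rw [map_sub, PowerSeries.coeff_mk, coeff_seriesB, coeff_seriesC] at h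
  have hk := key_card m n
  omega
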